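/- For any λ ∈ P_{kn} and integer r, the cylindric loops λ[r] and λ↓[r↓] define the same loop on the torus T_{kn}, where r↓ = r + diag_0(λ) and λ↓ is the partition whose 01-word is the cyclic rotation of ω(λ) by k positions. -/
import Mathlib


open Finset

/-- The set `P_{kn}` of partitions fitting in a `k × (n-k)` rectangle,
represented as antitone functions `Fin k → ℕ` bounded by `n - k`. -/
def PknFinset (k n : ℕ) : Finset (Fin k → ℕ) :=
  ((Finset.univ : Finset (Fin k → Fin (n - k + 1))).image (fun f i => (f i : ℕ))).filter
    (fun lam => ∀ i j : Fin k, i ≤ j → lam j ≤ lam i)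

/-- The 01-word of a partition `λ ∈ P_{kn}`: position `j` (0-based; 1-based `j+1`)
carries a `1` iff `j + 1 = λ_i + (k + 1 - i)` for some row `i`. -/
def omegaWord (n : ℕ) {k : ℕ} (lam : Fin k → ℕ) : Fin n → Bool :=
  fun j => decide (∃ i : Fin k, lam i + (k - (i : ℕ)) = (j : ℕ) + 1)

/-- The complement partition `λ∨`, with `λ∨_i = n - k - λ_{k+1-i}`. -/
def complP (n k : ℕ) (lam : Fin k → ℕ) : Fin k → ℕ :=
  fun i => (n - k) - lam (Fin.rev i)

/-- Size of the Durfee square of `λ` (number of boxes on the main diagonal). -/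
def diag0 {k : ℕ} (lam : Fin k → ℕ) : ℕ :=
  (Finset.univ.filter (fun i : Fin k => (i : ℕ) < lam i)).card

/-- Number of boxes of `λ` on the `i`-th diagonal. -/
def diagI {k : ℕ} (lam : Fin k → ℕ) (i : ℤ) : ℕ :=
  (Finset.univ.filter (fun a : Fin k => 0 ≤ (a : ℤ) + i ∧ (a : ℤ) + 1 + i ≤ (lam a : ℤ))).card

/-- `|λ| = λ_1 + ⋯ + λ_k`. -/
def psize {k : ℕ} (lam : Fin k → ℕ) : ℕ := ∑ i, lam i

/-- The value at index `t` of the cylindric loop `λ[r]`: the `(k,n)`-periodic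
weakly decreasing sequence with `λ[r]_{i+r} = λ_i + r` for `1 ≤ i ≤ k`. -/
def loopVal (n : ℕ) {k : ℕ} (lam : Fin k → ℕ) (r t : ℤ) : ℤ :=
  if h : 0 < k then
    (lam ⟨((t - r - 1) % (k : ℤ)).toNat, by
      have hk0 : ((k : ℤ)) ≠ 0 := by exact_mod_cast h.ne'
      have h1 : 0 ≤ (t - r - 1) % (k : ℤ) := Int.emod_nonneg _ hk0
      have h2 : (t - r - 1) % (k : ℤ) < (k : ℤ) := Int.emod_lt_of_pos _ (by exact_mod_cast h)
      omega⟩ : ℤ) + r - ((t - r - 1) / (k : ℤ)) * ((n : ℤ) - (k : ℤ))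
  else 0

/-- The cylindric diagram of shape `λ[r]/μ[s]`, as a `Shift`-invariant subset of `ℤ²`
(whose quotient modulo `(-k, n-k)ℤ` is the diagram in the cylinder). -/
def cylDiagram (n : ℕ) {k : ℕ} (lam mu : Fin k → ℕ) (r s : ℤ) : Set (ℤ × ℤ) :=
  {p | loopVal n mu s p.1 < p.2 ∧ p.2 ≤ loopVal n lam r p.1}

/-- The cylindric shape `λ[r]/μ[s]` is toric: the projection of its diagram from the
cylinder `ℤ²/(-k, n-k)ℤ` to the torus `(ℤ/k) × (ℤ/(n-k))` is injective. -/
def IsToricShape (n : ℕ) {k : ℕ} (lam mu : Fin k → ℕ) (r s : ℤ) : Prop :=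
  ∀ p q : ℤ × ℤ, p ∈ cylDiagram n lam mu r s → q ∈ cylDiagram n lam mu r s →
    (k : ℤ) ∣ (q.1 - p.1) → ((n : ℤ) - k) ∣ (q.2 - p.2) →
    ∃ m : ℤ, q.1 = p.1 - m * k ∧ q.2 = p.2 + m * ((n : ℤ) - k)

/-- A semi-standard cylindric tableau of shape `λ/d/μ = λ[d]/μ[0]`, encoded as a
`Shift`-periodic function on `ℤ²` that is positive exactly on the diagram, weakly
increasing along rows and strictly increasing along columns. -/
def IsCylTableau (n : ℕ) {k : ℕ} (lam mu : Fin k → ℕ) (d : ℕ) (T : ℤ × ℤ → ℕ) : Prop :=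
  (∀ p : ℤ × ℤ, p ∈ cylDiagram n lam mu (d : ℤ) 0 ↔ 0 < T p) ∧
  (∀ p : ℤ × ℤ, T (p.1 - (k : ℤ), p.2 + ((n : ℤ) - k)) = T p) ∧
  (∀ p : ℤ × ℤ, p ∈ cylDiagram n lam mu (d : ℤ) 0 →
      (p.1, p.2 + 1) ∈ cylDiagram n lam mu (d : ℤ) 0 → T p ≤ T (p.1, p.2 + 1)) ∧
  (∀ p : ℤ × ℤ, p ∈ cylDiagram n lam mu (d : ℤ) 0 →
      (p.1 + 1, p.2) ∈ cylDiagram n lam mu (d : ℤ) 0 → T p < T (p.1 + 1, p.2))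

/-- The number of entries of the cylindric tableau `T` equal to `c`, counted once per
`Shift`-orbit (rows `1,…,k` form a fundamental domain). -/
noncomputable def cylWeight (k : ℕ) (T : ℤ × ℤ → ℕ) (c : ℕ) : ℕ :=
  {p : ℤ × ℤ | 1 ≤ p.1 ∧ p.1 ≤ (k : ℤ) ∧ T p = c}.ncard

/-- Number of semi-standard cylindric tableaux of shape `λ/d/μ` with weight `β`
(entries taken among `1, …, l`). -/
noncomputable def tabCount (n : ℕ) {k : ℕ} (lam mu : Fin k → ℕ) (d : ℕ) {l : ℕ} (beta : Fin l → ℕ) : ℕ :=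
  {T : ℤ × ℤ → ℕ | IsCylTableau n lam mu d T ∧
    (∀ i : Fin l, cylWeight k T ((i : ℕ) + 1) = beta i) ∧
    (∀ c : ℕ, l < c → cylWeight k T c = 0)}.ncard

/-- The elementary symmetric generator `e_t` of `ℤ[q, e_1, …, e_k]` (zero out of range,
`1` for `t = 0`).  The variable `none` is the quantum parameter `q`. -/
noncomputable def epolyZ (k : ℕ) (t : ℤ) : MvPolynomial (Option (Fin k)) ℤ :=
  if t = 0 then 1
  else if h : 0 < t ∧ t ≤ (k : ℤ) then MvPolynomial.X (some ⟨(t - 1).toNat, by omega⟩) else 0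

/-- The complete homogeneous symmetric function `h_m`, expressed in the `e_i`
via the dual Jacobi–Trudi determinant. -/
noncomputable def hpolyD (k m : ℕ) : MvPolynomial (Option (Fin k)) ℤ :=
  Matrix.det (Matrix.of (fun i j : Fin m => epolyZ k (1 + (j : ℤ) - (i : ℤ))))

/-- `h_t` with the convention `h_t = 0` for `t < 0`. -/
noncomputable def hpolyDZ (k : ℕ) (t : ℤ) : MvPolynomial (Option (Fin k)) ℤ :=
  if 0 ≤ t then hpolyD k t.toNat else 0

/-- The ideal `I_q = ⟨h_{n-k+1}, …, h_{n-1}, h_n + (-1)^k q⟩` of `ℤ[q, e_1, …, e_k]`. -/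
noncomputable def qIdeal (k n : ℕ) : Ideal (MvPolynomial (Option (Fin k)) ℤ) :=
  Ideal.span ((hpolyD k '' (Set.Ioo (n - k) n)) ∪
    {hpolyD k n + ((-1) ^ k : ℤ) • MvPolynomial.X none})

/-- The quantum cohomology ring `QH*(Gr_{k,n}) = ℤ[q, e_1, …, e_k]/I_q`. -/
abbrev QHRing (k n : ℕ) := MvPolynomial (Option (Fin k)) ℤ ⧸ qIdeal k n

/-- The class of the quantum parameter `q` in `QH*(Gr_{k,n})`. -/
noncomputable def qClass (k n : ℕ) : QHRing k n := Ideal.Quotient.mk _ (MvPolynomial.X none)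

/-- The Schubert class `σ_λ ∈ QH*(Gr_{k,n})`, defined by the (quantum) Giambelli
formula `σ_λ = det(h_{λ_i + j - i})`. -/
noncomputable def sigmaClass (k n : ℕ) (lam : Fin k → ℕ) : QHRing k n :=
  Ideal.Quotient.mk _
    (Matrix.det (Matrix.of (fun i j : Fin k => hpolyDZ k ((lam i : ℤ) + (j : ℤ) - (i : ℤ)))))

/-- The special class `h_j = σ_{(j)}`. -/
noncomputable def hClass (k n : ℕ) (j : ℕ) : QHRing k n := Ideal.Quotient.mk _ (hpolyD k j)

/-- The special class `e_j = σ_{(1^j)}`. -/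
noncomputable def eClass (k n : ℕ) (j : ℕ) : QHRing k n := Ideal.Quotient.mk _ (epolyZ k (j : ℤ))

/-- The statement that `gw` is the family of structure constants (Gromov–Witten
invariants) of `QH*(Gr_{k,n})`:
`σ_μ * σ_ν = ∑_{d,λ} q^d C_{μν}^{λ,d} σ_λ` (all structure constants vanish
beyond degree `2k(n-k)`, which bounds the possible degrees). -/
def IsGWFamily (k n : ℕ)
    (gw : (Fin k → ℕ) → (Fin k → ℕ) → (Fin k → ℕ) → ℕ → ℤ) : Prop :=
  ∀ mu nu : Fin k → ℕ, mu ∈ PknFinset k n → nu ∈ PknFinset k n →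
    (sigmaClass k n mu * sigmaClass k n nu =
      ∑ e ∈ Finset.range (2 * k * (n - k) + 1), ∑ lm ∈ PknFinset k n,
        gw mu nu lm e • (qClass k n ^ e * sigmaClass k n lm)) ∧
    (∀ e lm, 2 * k * (n - k) < e → gw mu nu lm e = 0)

/-- Recover a partition in `P_{kn}` from a 01-word with `k` ones. -/
def partOfWord (k n : ℕ) (w : Fin n → Bool) : Fin k → ℕ :=
  fun i =>
    if h : (Finset.univ.filter (fun j : Fin n => w j = true)).card = k then
      ((Finset.orderIsoOfFin _ h (Fin.rev i) : Fin n) : ℕ) + 1 - (k - (i : ℕ))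
    else 0

/-- Cyclic rotation of a 01-word: `(rotWord a w)_j = w_{j+a mod n}`. -/
def rotWord (n : ℕ) (a : ℤ) (w : Fin n → Bool) : Fin n → Bool :=
  fun j =>
    if h : 0 < n then
      w ⟨(((j : ℤ) + a) % (n : ℤ)).toNat, by
        have hn0 : ((n : ℤ)) ≠ 0 := by exact_mod_cast h.ne'
        have h1 : 0 ≤ ((j : ℤ) + a) % (n : ℤ) := Int.emod_nonneg _ hn0
        have h2 : ((j : ℤ) + a) % (n : ℤ) < (n : ℤ) := Int.emod_lt_of_pos _ (by exact_mod_cast h)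
        omega⟩
    else false
  
/-- The `a`-th power of the cyclic shift `S` on `P_{kn}`:
`S^a(λ)` is the partition whose 01-word is `ω(λ)` rotated by `a`. -/
def Srot (k n : ℕ) (a : ℤ) (lam : Fin k → ℕ) : Fin k → ℕ :=
  partOfWord k n (rotWord n a (omegaWord n lam))

/-- `φ_i(λ)`: for `1 ≤ i ≤ n` the partial sum `ω_1 + ⋯ + ω_i` of the 01-word of `λ`,
extended to all `i ∈ ℤ` by `φ_{i+n} = φ_i + k`. -/
def phi (n : ℕ) {k : ℕ} (lam : Fin k → ℕ) (i : ℤ) : ℤ :=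
  ((Finset.univ.filter
      (fun j : Fin n => ((j : ℕ) : ℤ) < i % (n : ℤ) ∧ omegaWord n lam j = true)).card : ℤ)
    + (k : ℤ) * (i / (n : ℤ))

/-- `C_{λμν}(q) = ∑_e CCoef(λ,μ,ν,e) q^e`: the coefficient of `q^e` in the
Gromov–Witten generating function `q^d C^d_{λμν}` (zero unless `e` equals the
degree `d = (|λ|+|μ|+|ν|-k(n-k))/n`), where `C^d_{λμν} = C_{λμ}^{ν∨,d}`. -/
def CCoef (k n : ℕ) (gw : (Fin k → ℕ) → (Fin k → ℕ) → (Fin k → ℕ) → ℕ → ℤ)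
    (lam mu nu : Fin k → ℕ) (e : ℕ) : ℤ :=
  if ((psize lam : ℤ) + psize mu + psize nu) = (k : ℤ) * ((n : ℤ) - k) + (e : ℤ) * n then
    gw lam mu (complP n k nu) e
  else 0

/- ------------------- auxiliary development ------------------- -/

private theorem my_divmod (a b q ρ : ℤ) (hb : 0 < b) (h : a = b * q + ρ)
    (h0 : 0 ≤ ρ) (h1 : ρ < b) : a / b = q ∧ a % b = ρ := by
  have h' : a = ρ + b * q := by omega
  constructor
  · rw [h', Int.add_mul_ediv_left _ _ hb.ne', Int.ediv_eq_zero_of_lt h0 h1]; ring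
  · rw [h', Int.add_mul_emod_self_left]; exact Int.emod_eq_of_lt h0 h1

private lemma pkn_mono {k n : ℕ} {lam : Fin k → ℕ} (h : lam ∈ PknFinset k n) :
    ∀ i j : Fin k, i ≤ j → lam j ≤ lam i := (Finset.mem_filter.1 h).2

private lemma pkn_bound {k n : ℕ} {lam : Fin k → ℕ} (h : lam ∈ PknFinset k n) (i : Fin k) :
    lam i ≤ n - k := by
  obtain ⟨f, -, hf⟩ := Finset.mem_image.1 (Finset.mem_filter.1 h).1
  have : lam i = (f i : ℕ) := by rw [← hf]
  rw [this]
  exact Nat.lt_succ_iff.mp (f i).isLt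

private lemma diag0_le {k : ℕ} (lam : Fin k → ℕ) : diag0 lam ≤ k := by
  classical
  calc diag0 lam ≤ (Finset.univ : Finset (Fin k)).card := Finset.card_filter_le _ _
  _ = k := by simp

private lemma lt_diag0_iff {k : ℕ} {lam : Fin k → ℕ}
    (hmono : ∀ i j : Fin k, i ≤ j → lam j ≤ lam i) (i : Fin k) :
    (i : ℕ) < diag0 lam ↔ (i : ℕ) < lam i := by
  classical
  constructor
  · intro hi
    by_contra hcon
    push_neg at hcon
    have hsub : (Finset.univ.filter (fun j : Fin k => (j : ℕ) < lam j)) ⊆ Finset.Iio i := by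
      intro j hj
      rw [Finset.mem_filter] at hj
      rw [Finset.mem_Iio]
      by_contra hji
      push_neg at hji
      have h1 := hmono i j hji
      have h2 : (j : ℕ) < lam j := hj.2
      have h3 : (i : ℕ) ≤ (j : ℕ) := hji
      omega
    have hc := Finset.card_le_card hsub
    rw [Fin.card_Iio] at hc
    exact absurd hi (by unfold diag0; omega)
  · intro hi
    have hsub : Finset.Iic i ⊆ (Finset.univ.filter (fun j : Fin k => (j : ℕ) < lam j)) := by
      intro j hj
      rw [Finset.mem_Iic] at hj
      rw [Finset.mem_filter]
      refine ⟨Finset.mem_univ _, ?_⟩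
      have h1 := hmono j i hj
      have h3 : (j : ℕ) ≤ (i : ℕ) := hj
      omega
    have hc := Finset.card_le_card hsub
    rw [Fin.card_Iic] at hc
    unfold diag0
    omega

private lemma diag0_le_lam {k : ℕ} {lam : Fin k → ℕ}
    (hmono : ∀ i j : Fin k, i ≤ j → lam j ≤ lam i) (j : Fin k)
    (hj : (j : ℕ) < diag0 lam) : diag0 lam ≤ lam j := by
  have hd := diag0_le lam
  have hd1 : 1 ≤ diag0 lam := by omega
  have hi0 : diag0 lam - 1 < k := by omega
  have h1 : diag0 lam - 1 < lam ⟨diag0 lam - 1, hi0⟩ := by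
    have := (lt_diag0_iff hmono ⟨diag0 lam - 1, hi0⟩).1 (by simp; omega)
    simpa using this
  have h2 : lam ⟨diag0 lam - 1, hi0⟩ ≤ lam j :=
    hmono j ⟨diag0 lam - 1, hi0⟩ (by rw [Fin.le_def]; simp; omega)
  omega

private lemma diag0_le_nk {k n : ℕ} {lam : Fin k → ℕ} (hk : 0 < k)
    (hmono : ∀ i j : Fin k, i ≤ j → lam j ≤ lam i) (hb : ∀ i, lam i ≤ n - k) :
    diag0 lam ≤ n - k := by
  by_cases h : diag0 lam = 0
  · omega
  · have h1 := diag0_le_lam hmono ⟨0, hk⟩ (by simp; omega)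
    have h2 := hb ⟨0, hk⟩
    omega

/-- `pfun lam m` is the `m`-th smallest position (0-based) carrying a `1`
in the 01-word of `lam`. -/
private def pfun {k : ℕ} (lam : Fin k → ℕ) (m : Fin k) : ℕ := lam (Fin.rev m) + (m : ℕ)

/-- `qfun n lam m` is the `m`-th smallest position carrying a `1` in the 01-word
of `lam` rotated by `k`. -/
private def qfun (n : ℕ) {k : ℕ} (lam : Fin k → ℕ) (m : Fin k) : ℕ :=
  if (m : ℕ) < diag0 lam then
    pfun lam ⟨((m : ℕ) + k - diag0 lam) % k, Nat.mod_lt _ m.pos⟩ - k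
  else
    pfun lam ⟨((m : ℕ) - diag0 lam) % k, Nat.mod_lt _ m.pos⟩ + (n - k)

section PQ

variable {k n : ℕ} {lam : Fin k → ℕ}

private lemma pfun_mono (hmono : ∀ i j : Fin k, i ≤ j → lam j ≤ lam i)
    (a b : Fin k) (hab : a < b) : pfun lam a < pfun lam b := by
  have h1 : Fin.rev b ≤ Fin.rev a := by
    rw [Fin.le_def, Fin.val_rev, Fin.val_rev]
    have := Fin.lt_def.1 hab
    omega
  have h2 := hmono _ _ h1
  have h3 := Fin.lt_def.1 hab
  unfold pfun
  omega

private lemma pfun_lt_n (hb : ∀ i, lam i ≤ n - k) (hkn : k < n) (m : Fin k) :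
    pfun lam m < n := by
  have h1 := hb (Fin.rev m)
  have h2 := m.isLt
  unfold pfun
  omega

private lemma omega_iff (j : Fin n) :
    omegaWord n lam j = true ↔ ∃ m : Fin k, (j : ℕ) = pfun lam m := by
  simp only [omegaWord, decide_eq_true_eq]
  constructor
  · rintro ⟨i, hi⟩
    refine ⟨Fin.rev i, ?_⟩
    unfold pfun
    rw [Fin.rev_rev, Fin.val_rev]
    have := i.isLt
    omega
  · rintro ⟨m, hm⟩
    refine ⟨Fin.rev m, ?_⟩
    unfold pfun at hm
    rw [Fin.val_rev]
    have h1 := m.isLt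
    omega

private lemma pfun_ge_k_iff (hmono : ∀ i j : Fin k, i ≤ j → lam j ≤ lam i) (m : Fin k) :
    k ≤ pfun lam m ↔ k - diag0 lam ≤ (m : ℕ) := by
  have h1 := lt_diag0_iff hmono (Fin.rev m)
  rw [Fin.val_rev] at h1
  have h2 := m.isLt
  have h3 := diag0_le lam
  unfold pfun
  omega

private lemma qfun_lo (m : Fin k) (h : (m : ℕ) < diag0 lam) (m' : Fin k)
    (h' : (m' : ℕ) = (m : ℕ) + k - diag0 lam) : qfun n lam m = pfun lam m' - k := by
  have hd := diag0_le lam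
  have hm := m.isLt
  have hm' := m'.isLt
  rw [qfun, if_pos h]
  have hidx : ((m : ℕ) + k - diag0 lam) % k = (m' : ℕ) := by
    rw [Nat.mod_eq_of_lt (by omega)]; omega
  simp only [hidx, Fin.eta]

private lemma qfun_hi (m : Fin k) (h : diag0 lam ≤ (m : ℕ)) (m' : Fin k)
    (h' : (m' : ℕ) = (m : ℕ) - diag0 lam) : qfun n lam m = pfun lam m' + (n - k) := by
  have hm := m.isLt
  rw [qfun, if_neg (by omega)]
  have hidx : ((m : ℕ) - diag0 lam) % k = (m' : ℕ) := by
    rw [Nat.mod_eq_of_lt (by omega)]; omega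
  simp only [hidx, Fin.eta]

private lemma qfun_lt_n (hkn : k < n)
    (hmono : ∀ i j : Fin k, i ≤ j → lam j ≤ lam i) (hb : ∀ i, lam i ≤ n - k)
    (m : Fin k) : qfun n lam m < n := by
  have hd := diag0_le lam
  have hmk := m.isLt
  by_cases hc : (m : ℕ) < diag0 lam
  · rw [qfun_lo m hc ⟨(m : ℕ) + k - diag0 lam, by omega⟩ rfl]
    have := pfun_lt_n hb hkn ⟨(m : ℕ) + k - diag0 lam, by omega⟩
    omega
  · rw [qfun_hi m (by omega) ⟨(m : ℕ) - diag0 lam, by omega⟩ rfl]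
    have hlt : ¬ k ≤ pfun lam ⟨(m : ℕ) - diag0 lam, by omega⟩ := by
      rw [pfun_ge_k_iff hmono]
      show ¬ (k - diag0 lam ≤ (m : ℕ) - diag0 lam)
      omega
    omega

private lemma qfun_mono (hkn : k < n)
    (hmono : ∀ i j : Fin k, i ≤ j → lam j ≤ lam i) (hb : ∀ i, lam i ≤ n - k)
    (a b : Fin k) (hab : a < b) : qfun n lam a < qfun n lam b := by
  have hd := diag0_le lam
  have ha := a.isLt
  have hb' := b.isLt
  have hab' := Fin.lt_def.1 hab
  by_cases hca : (a : ℕ) < diag0 lam <;> by_cases hcb : (b : ℕ) < diag0 lam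
  · rw [qfun_lo a hca ⟨(a : ℕ) + k - diag0 lam, by omega⟩ rfl,
      qfun_lo b hcb ⟨(b : ℕ) + k - diag0 lam, by omega⟩ rfl]
    have hm := pfun_mono hmono ⟨(a : ℕ) + k - diag0 lam, by omega⟩
      ⟨(b : ℕ) + k - diag0 lam, by omega⟩
      (by rw [Fin.lt_def]; show (a : ℕ) + k - diag0 lam < (b : ℕ) + k - diag0 lam; omega)
    have hka : k ≤ pfun lam ⟨(a : ℕ) + k - diag0 lam, by omega⟩ := by
      rw [pfun_ge_k_iff hmono]
      show k - diag0 lam ≤ (a : ℕ) + k - diag0 lam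
      omega
    omega
  · rw [qfun_lo a hca ⟨(a : ℕ) + k - diag0 lam, by omega⟩ rfl,
      qfun_hi b (by omega) ⟨(b : ℕ) - diag0 lam, by omega⟩ rfl]
    have h1 := pfun_lt_n hb hkn ⟨(a : ℕ) + k - diag0 lam, by omega⟩
    omega
  · omega
  · rw [qfun_hi a (by omega) ⟨(a : ℕ) - diag0 lam, by omega⟩ rfl,
      qfun_hi b (by omega) ⟨(b : ℕ) - diag0 lam, by omega⟩ rfl]
    have hm := pfun_mono hmono ⟨(a : ℕ) - diag0 lam, by omega⟩
      ⟨(b : ℕ) - diag0 lam, by omega⟩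
      (by rw [Fin.lt_def]; show (a : ℕ) - diag0 lam < (b : ℕ) - diag0 lam; omega)
    omega

private lemma rot_iff (hkn : k < n)
    (hmono : ∀ i j : Fin k, i ≤ j → lam j ≤ lam i) (hb : ∀ i, lam i ≤ n - k)
    (j : Fin n) :
    rotWord n (k : ℤ) (omegaWord n lam) j = true ↔ ∃ m : Fin k, (j : ℕ) = qfun n lam m := by
  have hn : 0 < n := by omega
  have hd := diag0_le lam
  simp only [rotWord]
  rw [dif_pos hn]
  have hidx : ((((j : ℕ) : ℤ) + (k : ℤ)) % (n : ℤ)).toNat = ((j : ℕ) + k) % n := by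
    have h1 : (((j : ℕ) : ℤ) + (k : ℤ)) % (n : ℤ) = ((((j : ℕ) + k) % n : ℕ) : ℤ) := by
      push_cast; ring
    rw [h1, Int.toNat_natCast]
  simp only [hidx]
  rw [omega_iff]
  have hj := j.isLt
  constructor
  · rintro ⟨m, hm⟩
    have hm' : ((j : ℕ) + k) % n = pfun lam m := hm
    have hmk := m.isLt
    have hplt := pfun_lt_n hb hkn m
    by_cases hc : (j : ℕ) + k < n
    · rw [Nat.mod_eq_of_lt hc] at hm'
      have h1 : k - diag0 lam ≤ (m : ℕ) := (pfun_ge_k_iff hmono m).1 (by omega)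
      refine ⟨⟨(m : ℕ) - (k - diag0 lam), by omega⟩, ?_⟩
      rw [qfun_lo _ (by show (m : ℕ) - (k - diag0 lam) < diag0 lam; omega) m
        (by show (m : ℕ) = (m : ℕ) - (k - diag0 lam) + k - diag0 lam; omega)]
      omega
    · have hmod : ((j : ℕ) + k) % n = (j : ℕ) + k - n := by
        rw [Nat.mod_eq_sub_mod (by omega), Nat.mod_eq_of_lt (by omega)]
      rw [hmod] at hm'
      have h1 : ¬ k ≤ pfun lam m := by omega
      have h2 : (m : ℕ) < k - diag0 lam := by
        by_contra hcon
        exact h1 ((pfun_ge_k_iff hmono m).2 (by omega))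
      refine ⟨⟨(m : ℕ) + diag0 lam, by omega⟩, ?_⟩
      rw [qfun_hi _ (by show diag0 lam ≤ (m : ℕ) + diag0 lam; omega) m
        (by show (m : ℕ) = (m : ℕ) + diag0 lam - diag0 lam; omega)]
      omega
  · rintro ⟨m', hm⟩
    have hm'k := m'.isLt
    by_cases hc : (m' : ℕ) < diag0 lam
    · have hmm : (m' : ℕ) + k - diag0 lam < k := by omega
      rw [qfun_lo m' hc ⟨(m' : ℕ) + k - diag0 lam, hmm⟩ rfl] at hm
      have hge : k ≤ pfun lam ⟨(m' : ℕ) + k - diag0 lam, hmm⟩ := by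
        rw [pfun_ge_k_iff hmono]
        show k - diag0 lam ≤ (m' : ℕ) + k - diag0 lam
        omega
      have hlt := pfun_lt_n hb hkn ⟨(m' : ℕ) + k - diag0 lam, hmm⟩
      refine ⟨⟨(m' : ℕ) + k - diag0 lam, hmm⟩, ?_⟩
      show ((j : ℕ) + k) % n = _
      rw [Nat.mod_eq_of_lt (by omega)]
      omega
    · have hmm : (m' : ℕ) - diag0 lam < k := by omega
      rw [qfun_hi m' (by omega) ⟨(m' : ℕ) - diag0 lam, hmm⟩ rfl] at hm
      have hlt : ¬ k ≤ pfun lam ⟨(m' : ℕ) - diag0 lam, hmm⟩ := by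
        rw [pfun_ge_k_iff hmono]
        show ¬ (k - diag0 lam ≤ (m' : ℕ) - diag0 lam)
        omega
      refine ⟨⟨(m' : ℕ) - diag0 lam, hmm⟩, ?_⟩
      show ((j : ℕ) + k) % n = _
      have heq : (j : ℕ) + k = pfun lam ⟨(m' : ℕ) - diag0 lam, hmm⟩ + n := by omega
      rw [heq, Nat.add_mod_right, Nat.mod_eq_of_lt (by omega)]

end PQ

private lemma srot_spec {k n : ℕ} {lam : Fin k → ℕ} (hk : 1 ≤ k) (hkn : k < n)
    (hmono : ∀ i j : Fin k, i ≤ j → lam j ≤ lam i) (hb : ∀ i, lam i ≤ n - k)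
    (i : Fin k) :
    ((Srot k n (k : ℤ) lam i : ℕ) : ℤ) =
      ((lam ⟨((i : ℕ) + diag0 lam) % k, Nat.mod_lt _ i.pos⟩ : ℕ) : ℤ) +
        (if (i : ℕ) + diag0 lam < k then (n : ℤ) - (k : ℤ) - (diag0 lam : ℤ)
          else -(diag0 lam : ℤ)) := by
  classical
  have hn : 0 < n := by omega
  have hd := diag0_le lam
  have hdnk : diag0 lam ≤ n - k := diag0_le_nk hk hmono hb
  have hii := i.isLt
  set W := rotWord n (k : ℤ) (omegaWord n lam) with hW
  set S' := Finset.univ.filter (fun j : Fin n => W j = true) with hS'def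
  have hqlt : ∀ m : Fin k, qfun n lam m < n := qfun_lt_n hkn hmono hb
  set Q : Fin k → Fin n := fun m => ⟨qfun n lam m, hqlt m⟩ with hQ
  have hQmono : StrictMono Q := fun a b hab => by
    rw [Fin.lt_def]; exact qfun_mono hkn hmono hb a b hab
  have hSQ : ∀ j : Fin n, j ∈ S' ↔ ∃ m, Q m = j := by
    intro j
    rw [hS'def, Finset.mem_filter]
    simp only [Finset.mem_univ, true_and]
    rw [hW, rot_iff hkn hmono hb]
    constructor
    · rintro ⟨m, hm⟩; exact ⟨m, Fin.ext hm.symm⟩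
    · rintro ⟨m, rfl⟩; exact ⟨m, rfl⟩
  have hS'img : S' = Finset.image Q Finset.univ := by
    ext j
    rw [hSQ]
    simp [Finset.mem_image]
  have hcard : S'.card = k := by
    rw [hS'img, Finset.card_image_of_injective _ hQmono.injective, Finset.card_univ,
      Fintype.card_fin]
  have horder : ∀ x : Fin k, (S'.orderEmbOfFin hcard) x = Q x := by
    have h := Finset.orderEmbOfFin_unique hcard (f := Q)
      (fun x => (hSQ (Q x)).2 ⟨x, rfl⟩) hQmono
    intro x
    rw [← h]
  have hsrot : Srot k n (k : ℤ) lam i = qfun n lam (Fin.rev i) + 1 - (k - (i : ℕ)) := by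
    simp only [Srot, partOfWord]
    rw [← hW, ← hS'def, dif_pos hcard, Finset.coe_orderIsoOfFin_apply, horder]
  have hrevv : (Fin.rev i : ℕ) = k - ((i : ℕ) + 1) := Fin.val_rev i
  by_cases hc : (i : ℕ) + diag0 lam < k
  · rw [if_pos hc]
    set i0 : Fin k := ⟨((i : ℕ) + diag0 lam) % k, Nat.mod_lt _ i.pos⟩ with hi0
    have hi0v : (i0 : ℕ) = (i : ℕ) + diag0 lam := Nat.mod_eq_of_lt hc
    have hge : diag0 lam ≤ (Fin.rev i : ℕ) := by omega
    have h' : (Fin.rev i0 : ℕ) = (Fin.rev i : ℕ) - diag0 lam := by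
      rw [Fin.val_rev, Fin.val_rev, hi0v]; omega
    rw [qfun_hi (Fin.rev i) hge (Fin.rev i0) h'] at hsrot
    unfold pfun at hsrot
    rw [Fin.rev_rev] at hsrot
    rw [hsrot]
    have hrv0 : (Fin.rev i0 : ℕ) = k - ((i0 : ℕ) + 1) := Fin.val_rev i0
    omega
  · rw [if_neg hc]
    set i0 : Fin k := ⟨((i : ℕ) + diag0 lam) % k, Nat.mod_lt _ i.pos⟩ with hi0
    have hi0v : (i0 : ℕ) = (i : ℕ) + diag0 lam - k := by
      show ((i : ℕ) + diag0 lam) % k = (i : ℕ) + diag0 lam - k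
      rw [Nat.mod_eq_sub_mod (by omega), Nat.mod_eq_of_lt (by omega)]
    have hge : (Fin.rev i : ℕ) < diag0 lam := by omega
    have h' : (Fin.rev i0 : ℕ) = (Fin.rev i : ℕ) + k - diag0 lam := by
      rw [Fin.val_rev, Fin.val_rev, hi0v]; omega
    rw [qfun_lo (Fin.rev i) hge (Fin.rev i0) h'] at hsrot
    unfold pfun at hsrot
    rw [Fin.rev_rev] at hsrot
    have hlam0 : diag0 lam ≤ lam i0 := diag0_le_lam hmono i0 (by omega)
    rw [hsrot]
    have hrv0 : (Fin.rev i0 : ℕ) = k - ((i0 : ℕ) + 1) := Fin.val_rev i0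
    omega

private lemma loopVal_eq {k n : ℕ} (hk : 0 < k) (lam : Fin k → ℕ) (r t : ℤ) (i : Fin k)
    (q : ℤ) (h : t - r - 1 = (k : ℤ) * q + ((i : ℕ) : ℤ)) :
    loopVal n lam r t = ((lam i : ℕ) : ℤ) + r - q * ((n : ℤ) - (k : ℤ)) := by
  have hdm := my_divmod (t - r - 1) (k : ℤ) q ((i : ℕ) : ℤ) (by exact_mod_cast hk) h
    (by positivity) (by exact_mod_cast i.isLt)
  simp only [loopVal]
  rw [dif_pos hk]
  have h2 : ((t - r - 1) % (k : ℤ)).toNat = (i : ℕ) := by rw [hdm.2]; simp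
  simp only [h2, hdm.1, Fin.eta]

/-- The cylindric loops `λ[r]` and `λ↓[r↓]` define the same loop on the torus
`T_{kn}` (one is the shift of the other by the vector `(k, 0)`), where
`r↓ = r + diag₀(λ)` and `λ↓` has 01-word the cyclic rotation of `ω(λ)` by `k`. -/
theorem loop_down_eq_shift (k n : ℕ) (hk : 1 ≤ k) (hkn : k < n)
    (lam : Fin k → ℕ) (hlam : lam ∈ PknFinset k n) (r : ℤ) :
    ∀ t : ℤ, loopVal n (Srot k n (k : ℤ) lam) (r + (diag0 lam : ℤ)) (t + (k : ℤ)) =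
      loopVal n lam r t := by
  intro t
  have hmono := pkn_mono hlam
  have hb := pkn_bound hlam
  have hk0 : 0 < k := hk
  have hd := diag0_le lam
  have hdnk : diag0 lam ≤ n - k := diag0_le_nk hk0 hmono hb
  have hkz : (0 : ℤ) < (k : ℤ) := by exact_mod_cast hk0
  obtain ⟨q', ρ, hdecomp, hρ0, hρk⟩ :
      ∃ q ρ : ℤ, t - r - 1 - (diag0 lam : ℤ) = (k : ℤ) * q + ρ ∧ 0 ≤ ρ ∧ ρ < (k : ℤ) :=
    ⟨_, _, (Int.mul_ediv_add_emod _ _).symm, Int.emod_nonneg _ hkz.ne',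
      Int.emod_lt_of_pos _ hkz⟩
  have hρk' : ρ.toNat < k := by omega
  set i1 : Fin k := ⟨ρ.toNat, hρk'⟩ with hi1
  have hi1v : ((i1 : ℕ) : ℤ) = ρ := by
    show ((ρ.toNat : ℕ) : ℤ) = ρ
    omega
  have hL := loopVal_eq (n := n) hk0 (Srot k n (k : ℤ) lam) (r + (diag0 lam : ℤ))
    (t + (k : ℤ)) i1 (q' + 1) (by rw [hi1v]; linear_combination hdecomp)
  have hs := srot_spec hk hkn hmono hb i1
  by_cases hcase : ρ + (diag0 lam : ℤ) < (k : ℤ)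
  · have hlt : (ρ + (diag0 lam : ℤ)).toNat < k := by omega
    set i2 : Fin k := ⟨(ρ + (diag0 lam : ℤ)).toNat, hlt⟩ with hi2
    have hi2v : ((i2 : ℕ) : ℤ) = ρ + (diag0 lam : ℤ) := by
      show (((ρ + (diag0 lam : ℤ)).toNat : ℕ) : ℤ) = ρ + (diag0 lam : ℤ)
      omega
    have hR := loopVal_eq (n := n) hk0 lam r t i2 q'
      (by rw [hi2v]; linear_combination hdecomp)
    rw [hL, hR]
    have hc1 : (i1 : ℕ) + diag0 lam < k := by omega
    rw [if_pos hc1] at hs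
    have hidx : (⟨((i1 : ℕ) + diag0 lam) % k, Nat.mod_lt _ i1.pos⟩ : Fin k) = i2 := by
      apply Fin.ext
      show ((i1 : ℕ) + diag0 lam) % k = (i2 : ℕ)
      rw [Nat.mod_eq_of_lt hc1]
      omega
    rw [hidx] at hs
    rw [hs]
    ring
  · have hlt : (ρ + (diag0 lam : ℤ) - k).toNat < k := by omega
    set i2 : Fin k := ⟨(ρ + (diag0 lam : ℤ) - k).toNat, hlt⟩ with hi2
    have hi2v : ((i2 : ℕ) : ℤ) = ρ + (diag0 lam : ℤ) - k := by
      show (((ρ + (diag0 lam : ℤ) - k).toNat : ℕ) : ℤ) = ρ + (diag0 lam : ℤ) - k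
      omega
    have hR := loopVal_eq (n := n) hk0 lam r t i2 (q' + 1)
      (by rw [hi2v]; linear_combination hdecomp)
    rw [hL, hR]
    have hc1 : ¬ ((i1 : ℕ) + diag0 lam < k) := by omega
    rw [if_neg hc1] at hs
    have hidx : (⟨((i1 : ℕ) + diag0 lam) % k, Nat.mod_lt _ i1.pos⟩ : Fin k) = i2 := by
      apply Fin.ext
      show ((i1 : ℕ) + diag0 lam) % k = (i2 : ℕ)
      rw [Nat.mod_eq_sub_mod (by omega), Nat.mod_eq_of_lt (by omega)]
      omega
    rw [hidx] at hs
    rw [hs]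
    ring
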